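/- Let α : ℤ → ℂ with α_n ≠ 1 for all n, let v : ℤ × ℤ → ℂ with v_{n,m} ≠ 0 for all n,m, and define u_{n,m} = α_n + (α_n - 1)/v_{n,m} and λ_n = (α_{n+1}+1)(α_n-1). Then u satisfies the discrete Riccati equation (u_{n+1,m}+1)(u_{n,m}-1) = λ_n for all n,m ∈ ℤ if and only if v satisfies the linear equation ((α_{n+1}+1)/(α_{n+1}-1)) v_{n+1,m} + v_{n,m} + 1 = 0 for all n,m ∈ ℤ. -/
import Mathlib


/-- With `u_{n,m} = α_n + (α_n-1)/v_{n,m}` and `λ_n = (α_{n+1}+1)(α_n-1)`,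
`u` solves the discrete Riccati equation `(u_{n+1,m}+1)(u_{n,m}-1) = λ_n` iff
`v` solves the linear equation `((α_{n+1}+1)/(α_{n+1}-1)) v_{n+1,m} + v_{n,m} + 1 = 0`. -/
theorem stmt_6 (α : ℤ → ℂ) (hα : ∀ n : ℤ, α n ≠ 1)
    (v : ℤ → ℤ → ℂ) (hv : ∀ n m : ℤ, v n m ≠ 0)
    (u : ℤ → ℤ → ℂ)
    (hu : ∀ n m : ℤ, u n m = α n + (α n - 1) / v n m)
    (lam : ℤ → ℂ)
    (hlam : ∀ n : ℤ, lam n = (α (n + 1) + 1) * (α n - 1)) :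
    (∀ n m : ℤ, (u (n + 1) m + 1) * (u n m - 1) = lam n)
      ↔ (∀ n m : ℤ,
          (α (n + 1) + 1) / (α (n + 1) - 1) * v (n + 1) m + v n m + 1 = 0) := by
  have key : ∀ n m : ℤ, ((u (n + 1) m + 1) * (u n m - 1) = lam n) ↔
      ((α (n + 1) + 1) / (α (n + 1) - 1) * v (n + 1) m + v n m + 1 = 0) := by
    intro n m
    have h1 : α (n + 1) - 1 ≠ 0 := sub_ne_zero.mpr (hα (n + 1))
    have h2 : α n - 1 ≠ 0 := sub_ne_zero.mpr (hα n)
    have hv1 : v (n + 1) m ≠ 0 := hv (n + 1) m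
    have hv2 : v n m ≠ 0 := hv n m
    rw [hu, hu, hlam]
    constructor <;> intro h <;> field_simp at h ⊢
    · have h3 : (α n - 1) * ((α (n + 1) + 1) * v (n + 1) m
          + v n m * (α (n + 1) - 1) + (α (n + 1) - 1)) = 0 := by
        linear_combination h
      linear_combination (mul_eq_zero.mp h3).resolve_left h2
    · linear_combination (α n - 1) * h
  exact ⟨fun h n m => (key n m).mp (h n m), fun h n m => (key n m).mpr (h n m)⟩
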